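/- Let V be a real vector space with dim V ≥ r, and let 𝔩 ⊆ ℝ[S_r] be a left ideal. Then 𝔩 equals the real linear span of the set {T_b : T ∈ T_{𝔩*}, b ∈ V^r}, where T_{𝔩*} := {aT : a ∈ 𝔩*, T an r-multilinear map V^r → ℝ} and 𝔩* := {a* : a ∈ 𝔩}. -/

import Mathlib

/-- Action of a group ring element `a ∈ ℝ[S_r]` on an `r`-multilinear map:
`(aT)(v₁,…,v_r) = Σ_p a(p)·T(v_{p(1)},…,v_{p(r)})`. -/
noncomputable def gact {V : Type} [AddCommGroup V] [Module ℝ V] {r : ℕ}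
    (a : MonoidAlgebra ℝ (Equiv.Perm (Fin r)))
    (T : MultilinearMap ℝ (fun _ : Fin r => V) ℝ) :
    MultilinearMap ℝ (fun _ : Fin r => V) ℝ :=
  ∑ p : Equiv.Perm (Fin r), a.coeff p • T.domDomCongr p
/-- The star map `a* := Σ_p a(p)·p⁻¹` on the group ring `ℝ[S_r]`. -/
noncomputable def astar {r : ℕ} (a : MonoidAlgebra ℝ (Equiv.Perm (Fin r))) :
    MonoidAlgebra ℝ (Equiv.Perm (Fin r)) :=
  MonoidAlgebra.ofCoeff (Finsupp.equivFunOnFinite.symm (fun p => a.coeff p⁻¹))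
/-- `T_b := Σ_p T(v_{p(1)},…,v_{p(r)})·p ∈ ℝ[S_r]` for `b = (v₁,…,v_r)`. -/
noncomputable def tb {V : Type} [AddCommGroup V] [Module ℝ V] {r : ℕ}
    (T : MultilinearMap ℝ (fun _ : Fin r => V) ℝ) (b : Fin r → V) :
    MonoidAlgebra ℝ (Equiv.Perm (Fin r)) :=
  MonoidAlgebra.ofCoeff (Finsupp.equivFunOnFinite.symm (fun (p : Equiv.Perm (Fin r)) => T (fun i => b (p i))))

lemma tb_apply {V : Type} [AddCommGroup V] [Module ℝ V] {r : ℕ}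
    (T : MultilinearMap ℝ (fun _ : Fin r => V) ℝ) (b : Fin r → V) (p : Equiv.Perm (Fin r)) :
    (tb T b).coeff p = T (fun i => b (p i)) := by
  simp [tb]

lemma gact_apply {V : Type} [AddCommGroup V] [Module ℝ V] {r : ℕ}
    (a : MonoidAlgebra ℝ (Equiv.Perm (Fin r)))
    (T : MultilinearMap ℝ (fun _ : Fin r => V) ℝ) (v : Fin r → V) :
    gact a T v = ∑ p : Equiv.Perm (Fin r), a.coeff p * T (fun i => v (p i)) := by
  simp [gact, MultilinearMap.sum_apply, smul_eq_mul]

lemma key1 {V : Type} [AddCommGroup V] [Module ℝ V] {r : ℕ}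
    (a : MonoidAlgebra ℝ (Equiv.Perm (Fin r)))
    (T : MultilinearMap ℝ (fun _ : Fin r => V) ℝ) (b : Fin r → V) :
    tb (gact (astar a) T) b = tb T b * a := by
  ext p
  rw [tb_apply, gact_apply, MonoidAlgebra.coeff_mul_apply_right,
    Finsupp.sum_fintype _ _ (by intro q; simp)]
  refine Fintype.sum_equiv (Equiv.inv _) _ _ fun q => ?_
  simp only [astar, MonoidAlgebra.coeff_ofCoeff, Finsupp.equivFunOnFinite_symm_apply_apply, Equiv.inv_apply, inv_inv,
    tb_apply]
  rw [mul_comm]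
  rfl

lemma key2 {V : Type} [AddCommGroup V] [Module ℝ V] {r : ℕ}
    (hdim : (r : Cardinal) ≤ Module.rank ℝ V) :
    ∃ (T : MultilinearMap ℝ (fun _ : Fin r => V) ℝ) (b : Fin r → V), tb T b = 1 := by
  obtain ⟨s, hcard, hs⟩ := le_rank_iff_exists_linearIndependent_finset.mp hdim
  set g : Fin r → ↥((s : Set V)) := fun i =>
    ⟨(s.equivFin.symm ⟨i.val, hcard ▸ i.2⟩ : ↥s), by simp⟩ with hg
  have hginj : Function.Injective g := by
    intro i j hij
    have := congrArg Subtype.val hij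
    simp only [hg] at this
    have h2 : s.equivFin.symm ⟨i.val, hcard ▸ i.2⟩ = s.equivFin.symm ⟨j.val, hcard ▸ j.2⟩ :=
      Subtype.ext this
    have h3 := s.equivFin.symm.injective h2
    simp only [Fin.mk.injEq] at h3
    exact Fin.ext h3
  set b : Fin r → V := fun i => (g i : V) with hb
  have hbi : LinearIndependent ℝ b := hs.comp g hginj
  have hs' : LinearIndepOn ℝ id (s : Set V) := hs
  have hmem : ∀ i, b i ∈ hs'.extend (Set.subset_univ _) :=
    fun i => Module.Basis.subset_extend hs' (g i).2
  set f : Fin r → (V →ₗ[ℝ] ℝ) := fun i => (Module.Basis.extend hs').coord ⟨b i, hmem i⟩ with hf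
  have hfb : ∀ i j, f i (b j) = if i = j then 1 else 0 := by
    intro i j
    classical
    have : b j = Module.Basis.extend hs' ⟨b j, hmem j⟩ := (Module.Basis.extend_apply_self hs' ⟨b j, hmem j⟩).symm
    rw [hf]
    conv_lhs => rw [this]
    rw [Module.Basis.coord_apply, Module.Basis.repr_self, Finsupp.single_apply]
    congr 1
    simp only [Subtype.mk.injEq, eq_iff_iff]
    constructor
    · intro h; exact (hbi.injective h).symm
    · intro h; rw [h]
  refine ⟨(MultilinearMap.mkPiAlgebra ℝ (Fin r) ℝ).compLinearMap f, b, ?_⟩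
  ext p
  rw [tb_apply]
  simp only [MultilinearMap.compLinearMap_apply, MultilinearMap.mkPiAlgebra_apply]
  rw [MonoidAlgebra.one_def, MonoidAlgebra.coeff_single, Finsupp.single_apply]
  by_cases hp : p = 1
  · subst hp
    simp [hfb]
  · rw [if_neg (Ne.symm hp)]
    obtain ⟨i, hi⟩ : ∃ i, p i ≠ i := by
      by_contra h
      push_neg at h
      exact hp (Equiv.ext h)
    refine Finset.prod_eq_zero (Finset.mem_univ i) ?_
    rw [hfb]
    exact if_neg (fun h => hi h.symm)

/-- If `dim V ≥ r` then every left ideal `𝔩 ⊆ ℝ[S_r]` equals the real linear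
span of `{T_b : T ∈ T_{𝔩*}, b ∈ V^r}`, where `T_{𝔩*} = {(a*)T : a ∈ 𝔩, T r-multilinear}`. -/
theorem stmt_7 (V : Type) [AddCommGroup V] [Module ℝ V] {r : ℕ}
    (hdim : (r : Cardinal) ≤ Module.rank ℝ V)
    (l : Submodule (MonoidAlgebra ℝ (Equiv.Perm (Fin r)))
      (MonoidAlgebra ℝ (Equiv.Perm (Fin r)))) :
    (l : Set (MonoidAlgebra ℝ (Equiv.Perm (Fin r)))) =
      ↑(Submodule.span ℝ {x : MonoidAlgebra ℝ (Equiv.Perm (Fin r)) |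
        ∃ a ∈ l, ∃ (T' : MultilinearMap ℝ (fun _ : Fin r => V) ℝ) (b : Fin r → V),
          x = tb (gact (astar a) T') b}) := by
  ext x
  simp only [SetLike.mem_coe]
  constructor
  · intro hx
    obtain ⟨T₀, b₀, hT⟩ := key2 (V := V) hdim
    apply Submodule.subset_span
    exact ⟨x, hx, T₀, b₀, by rw [key1, hT, one_mul]⟩
  · intro hx
    have hsub : {x : MonoidAlgebra ℝ (Equiv.Perm (Fin r)) |
        ∃ a ∈ l, ∃ (T' : MultilinearMap ℝ (fun _ : Fin r => V) ℝ) (b : Fin r → V),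
          x = tb (gact (astar a) T') b} ⊆ (l.restrictScalars ℝ : Set _) := by
      rintro y ⟨a, ha, T', b, rfl⟩
      rw [key1]
      exact l.smul_mem (tb T' b) ha
    exact Submodule.span_le.mpr hsub hx
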